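/- Let R be a semiprime associative ring and let I be a Lie nilpotent one-sided (left or right) ideal of R. Then I ∩ R₂ = 0, where R₂ = [R,R] + [R,R]·R is the two-sided ideal of R generated by all commutators [r₁,r₂]. -/

import Mathlib

/-- `I` is a right ideal of `R` (as an additive subgroup closed under right multiplication). -/
def IsRightIdealSG {R : Type*} [Ring R] (I : AddSubgroup R) : Prop :=
  ∀ i ∈ I, ∀ r : R, i * r ∈ I

/-- `I` is a left ideal of `R`. -/
def IsLeftIdealSG {R : Type*} [Ring R] (I : AddSubgroup R) : Prop :=
  ∀ i ∈ I, ∀ r : R, r * i ∈ I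

/-- `I` is a two-sided ideal of `R`. -/
def IsIdealSG {R : Type*} [Ring R] (I : AddSubgroup R) : Prop :=
  IsLeftIdealSG I ∧ IsRightIdealSG I

/-- Left-normed iterated commutator: `itComm s n = [[...[s 0, s 1],...], s n]`
(a left-normed commutator of `n + 1` elements). -/
def itComm {R : Type*} [Ring R] (s : ℕ → R) : ℕ → R
  | 0 => s 0
  | n + 1 => itComm s n * s (n + 1) - s (n + 1) * itComm s n

/-- `S` is Lie nilpotent of class ≤ m : every left-normed commutator of `m + 1`
elements of `S` vanishes. -/
def LieNilpotentClassLe {R : Type*} [Ring R] (S : Set R) (m : ℕ) : Prop :=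
  ∀ s : ℕ → R, (∀ n, s n ∈ S) → itComm s m = 0

/-- The Lie derived series of an additive subgroup `S` of a ring:
`D 0 = S`, `D (k+1)` = additive span of `[D k, D k]`. -/
def derSeries {R : Type*} [Ring R] (S : AddSubgroup R) : ℕ → AddSubgroup R
  | 0 => S
  | n + 1 => AddSubgroup.closure
      {x | ∃ a ∈ derSeries S n, ∃ b ∈ derSeries S n, x = a * b - b * a}

/-- `R^(−)_n`: the additive subgroup generated by all left-normed commutators of
`n` elements of `R`. -/
def lcs (R : Type*) [Ring R] (n : ℕ) : AddSubgroup R :=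
  AddSubgroup.closure {x | ∃ s : ℕ → R, x = itComm s (n - 1)}

/-- `R_n = R^(−)_n + R^(−)_n · R`, a two-sided ideal of `R`. -/
def Rn (R : Type*) [Ring R] (n : ℕ) : AddSubgroup R :=
  lcs R n ⊔ AddSubgroup.closure {x | ∃ c ∈ lcs R n, ∃ r : R, x = c * r}

/-- The additive span of `k`-fold products of elements of `S`. -/
def spanPow {R : Type*} [Ring R] (S : Set R) (k : ℕ) : AddSubgroup R :=
  AddSubgroup.closure {x | ∃ l : List R, l.length = k ∧ (∀ a ∈ l, a ∈ S) ∧ x = l.prod}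

/-- `J` is nilpotent: all `k`-fold products of its elements vanish for some `k > 0`. -/
def IsNilpotentSG {R : Type*} [Ring R] (J : AddSubgroup R) : Prop :=
  ∃ k : ℕ, 0 < k ∧ ∀ l : List R, l.length = k → (∀ a ∈ l, a ∈ J) → l.prod = 0

/-- `R` is semiprime: it has no nonzero nilpotent two-sided ideals. -/
def IsSemiprimeRing (R : Type*) [Ring R] : Prop :=
  ∀ J : AddSubgroup R, IsIdealSG J → IsNilpotentSG J → J = ⊥
section Main
variable {R : Type*} [Ring R]

lemma sp_aux (hsp : IsSemiprimeRing R) (x : R) (h : ∀ r : R, x * r * x = 0) : x = 0 := by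
  set S : Set R := {y | ∃ r s : R, y = r * x * s} with hS
  set J : AddSubgroup R := AddSubgroup.closure S with hJ
  have hgen : ∀ y ∈ S, ∀ z ∈ S, y * z = 0 := by
    rintro y ⟨r, s, rfl⟩ z ⟨r', s', rfl⟩
    have h0 := h (s * r')
    calc r * x * s * (r' * x * s') = r * (x * (s * r') * x) * s' := by noncomm_ring
      _ = 0 := by rw [h0]; simp
  have hJJ : ∀ y ∈ J, ∀ z ∈ J, y * z = 0 := by
    have step1 : ∀ y ∈ S, ∀ z ∈ J, y * z = 0 := by
      intro y hy z hz
      let K : AddSubgroup R :=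
        { carrier := {z | y * z = 0}
          zero_mem' := by simp
          add_mem' := by intro a b ha hb; simp only [Set.mem_setOf_eq] at *
                         rw [mul_add, ha, hb, add_zero]
          neg_mem' := by intro a ha; simp only [Set.mem_setOf_eq] at *
                         rw [mul_neg, ha, neg_zero] }
      have : J ≤ K := AddSubgroup.closure_le K |>.mpr (fun z hz => hgen y hy z hz)
      exact this hz
    intro y hy z hz
    let K : AddSubgroup R :=
      { carrier := {y | y * z = 0}
        zero_mem' := by simp
        add_mem' := by intro a b ha hb; simp only [Set.mem_setOf_eq] at *
                       rw [add_mul, ha, hb, add_zero]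
        neg_mem' := by intro a ha; simp only [Set.mem_setOf_eq] at *
                       rw [neg_mul, ha, neg_zero] }
    have : J ≤ K := AddSubgroup.closure_le K |>.mpr (fun y hy => step1 y hy z hz)
    exact this hy
  have hleft : IsLeftIdealSG J := by
    intro j hj t
    let K : AddSubgroup R :=
      { carrier := {j | t * j ∈ J}
        zero_mem' := by simp only [Set.mem_setOf_eq, mul_zero]; exact zero_mem J
        add_mem' := by intro a b ha hb; simp only [Set.mem_setOf_eq] at *
                       rw [mul_add]; exact add_mem ha hb
        neg_mem' := by intro a ha; simp only [Set.mem_setOf_eq] at *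
                       rw [mul_neg]; exact neg_mem ha }
    have : J ≤ K := by
      refine AddSubgroup.closure_le K |>.mpr ?_
      rintro y ⟨r, s, rfl⟩
      exact AddSubgroup.subset_closure ⟨t * r, s, by noncomm_ring⟩
    exact this hj
  have hright : IsRightIdealSG J := by
    intro j hj t
    let K : AddSubgroup R :=
      { carrier := {j | j * t ∈ J}
        zero_mem' := by simp only [Set.mem_setOf_eq, zero_mul]; exact zero_mem J
        add_mem' := by intro a b ha hb; simp only [Set.mem_setOf_eq] at *
                       rw [add_mul]; exact add_mem ha hb
        neg_mem' := by intro a ha; simp only [Set.mem_setOf_eq] at *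
                       rw [neg_mul]; exact neg_mem ha }
    have : J ≤ K := by
      refine AddSubgroup.closure_le K |>.mpr ?_
      rintro y ⟨r, s, rfl⟩
      exact AddSubgroup.subset_closure ⟨r, s * t, by noncomm_ring⟩
    exact this hj
  have hnilJ : IsNilpotentSG J := by
    refine ⟨2, by norm_num, ?_⟩
    intro l hl hmem
    obtain ⟨a, b, rfl⟩ := List.length_eq_two.mp hl
    simp only [List.prod_cons, List.prod_nil, mul_one]
    exact hJJ a (hmem a (by simp)) b (hmem b (by simp))
  have hbot : J = ⊥ := hsp J ⟨hleft, hright⟩ hnilJ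
  have hxJ : x ∈ J := AddSubgroup.subset_closure ⟨1, 1, by simp⟩
  rw [hbot, AddSubgroup.mem_bot] at hxJ
  exact hxJ

lemma itComm_congr (s t : ℕ → R) : ∀ n, (∀ k ≤ n, s k = t k) → itComm s n = itComm t n := by
  intro n
  induction n with
  | zero => intro h; exact h 0 le_rfl
  | succ n ih =>
    intro h
    show itComm s n * s (n+1) - s (n+1) * itComm s n = _
    rw [ih (fun k hk => h k (hk.trans (Nat.le_succ n))), h (n+1) le_rfl]
    rfl

lemma itComm_mem (I : AddSubgroup R) (hmul : ∀ a ∈ I, ∀ b ∈ I, a * b ∈ I)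
    (s : ℕ → R) (hs : ∀ n, s n ∈ I) : ∀ n, itComm s n ∈ I := by
  intro n
  induction n with
  | zero => exact hs 0
  | succ n ih => exact sub_mem (hmul _ ih _ (hs (n+1))) (hmul _ (hs (n+1)) _ ih)

/-- Commutation relations extracted from the Lie nilpotency hypothesis. -/
lemma nil_rels (I : AddSubgroup R) (m : ℕ)
    (h : LieNilpotentClassLe (I : Set R) (m+2)) (s : ℕ → R) (hs : ∀ n, s n ∈ I) :
    (∀ y ∈ I, itComm s (m+1) * y = y * itComm s (m+1)) ∧
    (∀ z ∈ I, ∀ y ∈ I,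
      (itComm s m * z - z * itComm s m) * y = y * (itComm s m * z - z * itComm s m)) := by
  constructor
  · intro y hy
    set t : ℕ → R := fun n => if n ≤ m+1 then s n else y with ht
    have hs1 : ∀ n, t n ∈ (I : Set R) := by
      intro n; simp only [ht]; split
      · exact hs n
      · exact hy
    have h0 := h t hs1
    have e1 : itComm t (m+1) = itComm s (m+1) :=
      itComm_congr _ _ _ (fun k hk => by simp [ht, hk])
    rw [show itComm t (m+2) = itComm t (m+1) * t (m+2) - t (m+2) * itComm t (m+1) from rfl,
      e1, show t (m+2) = y by simp only [ht]; rw [if_neg (by omega)]] at h0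
    exact sub_eq_zero.mp h0
  · intro z hz y hy
    set t : ℕ → R := fun n => if n ≤ m then s n else if n = m+1 then z else y with ht
    have hs2 : ∀ n, t n ∈ (I : Set R) := by
      intro n; simp only [ht]; split
      · exact hs n
      · split
        · exact hz
        · exact hy
    have h0 := h t hs2
    have e0 : itComm t m = itComm s m := itComm_congr _ _ _ (fun k hk => by simp [ht, hk])
    have e1 : itComm t (m+1) = itComm s m * z - z * itComm s m := by
      rw [show itComm t (m+1) = itComm t m * t (m+1) - t (m+1) * itComm t m from rfl, e0,
        show t (m+1) = z by simp only [ht]; rw [if_neg (by omega)]; simp]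
    rw [show itComm t (m+2) = itComm t (m+1) * t (m+2) - t (m+2) * itComm t (m+1) from rfl,
      e1, show t (m+2) = y by simp only [ht]; rw [if_neg (by omega), if_neg (by omega)]] at h0
    exact sub_eq_zero.mp h0

lemma down_left (hsp : IsSemiprimeRing R) (I : AddSubgroup R) (hI : IsLeftIdealSG I) (m : ℕ)
    (h : LieNilpotentClassLe (I : Set R) (m+2)) :
    LieNilpotentClassLe (I : Set R) (m+1) := by
  intro s hs
  obtain ⟨ha, hb⟩ := nil_rels I m h s hs
  have hmul : ∀ a ∈ I, ∀ b ∈ I, a * b ∈ I := fun a haa b hbb => hI b hbb a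
  set d := itComm s m with hd
  set x := s (m+1) with hx0
  have hc : itComm s (m+1) = d * x - x * d := rfl
  set c := itComm s (m+1) with hcdef
  have hdI : d ∈ I := itComm_mem I hmul s hs m
  have hcI : c ∈ I := itComm_mem I hmul s hs (m+1)
  have hxI : x ∈ I := hs (m+1)
  have e1 : c * x = x * c := ha x hxI
  have e2 := hb (d * x) (hmul d hdI x hxI) x hxI
  rw [show d * (d*x) - (d*x) * d = d * c by rw [hc]; noncomm_ring] at e2
  have hcc : c * c = 0 := by
    have s1 : c * c = d * (x * c) - x * (d * c) := by rw [hc]; noncomm_ring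
    rw [s1, ← e1, ← mul_assoc, e2, sub_self]
  have hcrc : ∀ r : R, c * r * c = 0 := by
    intro r
    have h3 := ha (r * c) (hI c hcI r)
    calc c * r * c = c * (r * c) := by rw [mul_assoc]
      _ = (r * c) * c := h3
      _ = r * (c * c) := by rw [mul_assoc]
      _ = 0 := by rw [hcc, mul_zero]
  exact sp_aux hsp c hcrc

lemma down_right (hsp : IsSemiprimeRing R) (I : AddSubgroup R) (hI : IsRightIdealSG I) (m : ℕ)
    (h : LieNilpotentClassLe (I : Set R) (m+2)) :
    LieNilpotentClassLe (I : Set R) (m+1) := by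
  intro s hs
  obtain ⟨ha, hb⟩ := nil_rels I m h s hs
  have hmul : ∀ a ∈ I, ∀ b ∈ I, a * b ∈ I := fun a haa b hbb => hI a haa b
  set d := itComm s m with hd
  set x := s (m+1) with hx0
  have hc : itComm s (m+1) = d * x - x * d := rfl
  set c := itComm s (m+1) with hcdef
  have hdI : d ∈ I := itComm_mem I hmul s hs m
  have hcI : c ∈ I := itComm_mem I hmul s hs (m+1)
  have hxI : x ∈ I := hs (m+1)
  have e1 : c * x = x * c := ha x hxI
  have e2 := hb (x * d) (hmul x hxI d hdI) x hxI
  rw [show d * (x*d) - (x*d) * d = c * d by rw [hc]; noncomm_ring] at e2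
  have hcc : c * c = 0 := by
    have s1 : c * c = (c * d) * x - (c * x) * d := by rw [hc]; noncomm_ring
    rw [s1, e1, e2, mul_assoc, sub_self]
  have hcrc : ∀ r : R, c * r * c = 0 := by
    intro r
    have h3 := ha (c * r) (hI c hcI r)
    calc c * r * c = (c * r) * c := rfl
      _ = c * (c * r) := h3.symm
      _ = (c * c) * r := by rw [mul_assoc]
      _ = 0 := by rw [hcc, zero_mul]
  exact sp_aux hsp c hcrc

lemma comm_of_nil (hsp : IsSemiprimeRing R) (I : AddSubgroup R)
    (hI : IsLeftIdealSG I ∨ IsRightIdealSG I) :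
    ∀ m, LieNilpotentClassLe (I : Set R) m → ∀ a ∈ I, ∀ b ∈ I, a * b = b * a := by
  intro m
  induction m with
  | zero =>
    intro h a haa b hbb
    have ha0 : a = 0 := h (fun _ => a) (fun _ => haa)
    rw [ha0, zero_mul, mul_zero]
  | succ n ih =>
    match n with
    | 0 =>
      intro h a haa b hbb
      have h0 := h (fun k => if k = 0 then a else b)
        (fun k => by split; exacts [haa, hbb])
      have : a * b - b * a = 0 := by simpa [itComm] using h0
      exact sub_eq_zero.mp this
    | Nat.succ k =>
      intro h
      apply ih
      rcases hI with hl | hr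
      · exact down_left hsp I hl k h
      · exact down_right hsp I hr k h

lemma central_left (hsp : IsSemiprimeRing R) (I : AddSubgroup R) (hI : IsLeftIdealSG I)
    (hcomm : ∀ a ∈ I, ∀ b ∈ I, a * b = b * a) :
    ∀ a ∈ I, ∀ r : R, a * r = r * a := by
  intro a ha r
  have hxb : ∀ b ∈ I, (a * r - r * a) * b = 0 := by
    intro b hb
    have h1 : a * (r * b) = (r * b) * a := hcomm a ha _ (hI b hb r)
    have h2 : a * b = b * a := hcomm a ha b hb
    calc (a * r - r * a) * b = a * (r * b) - r * (a * b) := by noncomm_ring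
      _ = (r * b) * a - r * (b * a) := by rw [h1, h2]
      _ = 0 := by noncomm_ring
  have hx : ∀ t : R, (a * r - r * a) * t * (a * r - r * a) = 0 := by
    intro t
    have e1 : (a * r - r * a) * (t * a) = 0 := hxb _ (hI a ha t)
    have e2 : (a * r - r * a) * ((t * r) * a) = 0 := hxb _ (hI a ha (t * r))
    calc (a * r - r * a) * t * (a * r - r * a)
        = ((a * r - r * a) * (t * a)) * r - (a * r - r * a) * ((t * r) * a) := by noncomm_ring
      _ = 0 := by rw [e1, e2, zero_mul, sub_zero]
  exact sub_eq_zero.mp (sp_aux hsp _ hx)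

lemma central_right (hsp : IsSemiprimeRing R) (I : AddSubgroup R) (hI : IsRightIdealSG I)
    (hcomm : ∀ a ∈ I, ∀ b ∈ I, a * b = b * a) :
    ∀ a ∈ I, ∀ r : R, a * r = r * a := by
  intro a ha r
  have hxb : ∀ b ∈ I, b * (a * r - r * a) = 0 := by
    intro b hb
    have h1 : b * a = a * b := hcomm b hb a ha
    have h2 : a * (b * r) = (b * r) * a := hcomm a ha _ (hI b hb r)
    calc b * (a * r - r * a) = (b * a) * r - b * r * a := by noncomm_ring
      _ = (a * (b * r)) - b * r * a := by rw [h1, mul_assoc]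
      _ = (b * r) * a - b * r * a := by rw [h2]
      _ = 0 := by noncomm_ring
  have hx : ∀ t : R, (a * r - r * a) * t * (a * r - r * a) = 0 := by
    intro t
    have e1 : (a * (r * t)) * (a * r - r * a) = 0 := hxb _ (hI a ha (r * t))
    have e2 : (a * t) * (a * r - r * a) = 0 := hxb _ (hI a ha t)
    calc (a * r - r * a) * t * (a * r - r * a)
        = (a * (r * t)) * (a * r - r * a) - r * ((a * t) * (a * r - r * a)) := by noncomm_ring
      _ = 0 := by rw [e1, e2, mul_zero, sub_zero]
  exact sub_eq_zero.mp (sp_aux hsp _ hx)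

end Main

/-- **Corollary 2, second part.** In a semiprime ring, a Lie nilpotent
one-sided ideal `I` has trivial intersection with `R₂ = [R,R] + [R,R]·R`. -/
theorem semiprime_lie_nilpotent_ideal_inter_R2 {R : Type*} [Ring R]
    (hsp : IsSemiprimeRing R)
    (I : AddSubgroup R) (hI : IsLeftIdealSG I ∨ IsRightIdealSG I)
    (hnil : ∃ m, LieNilpotentClassLe (I : Set R) m) :
    I ⊓ Rn R 2 = ⊥ := by
  obtain ⟨m, hm⟩ := hnil
  have hcomm : ∀ a ∈ I, ∀ b ∈ I, a * b = b * a := comm_of_nil hsp I hI m hm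
  have hcent : ∀ a ∈ I, ∀ r : R, a * r = r * a := by
    rcases hI with hl | hr
    · exact central_left hsp I hl hcomm
    · exact central_right hsp I hr hcomm
  have hsmul : ∀ i ∈ I, ∀ s : R, s * i ∈ I := by
    rcases hI with hl | hr
    · exact fun i hi s => hl i hi s
    · exact fun i hi s => (hcent i hi s) ▸ hr i hi s
  -- every element of `Rn R 2` annihilates `I` on the right
  have hci : ∀ i ∈ I, ∀ r s : R, (r * s - s * r) * i = 0 := by
    intro i hi r s
    have h1 : (s * i) * r = r * (s * i) := hcent _ (hsmul i hi s) r
    have h2 : i * r = r * i := hcent i hi r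
    calc (r * s - s * r) * i = r * (s * i) - s * (r * i) := by noncomm_ring
      _ = (s * i) * r - s * (r * i) := by rw [h1]
      _ = s * (i * r) - s * (r * i) := by rw [mul_assoc]
      _ = 0 := by rw [h2, sub_self]
  have hK : ∀ i ∈ I, Rn R 2 ≤
      { carrier := {y | y * i = 0}
        zero_mem' := by simp
        add_mem' := by intro a b ha hb; simp only [Set.mem_setOf_eq] at *
                       rw [add_mul, ha, hb, add_zero]
        neg_mem' := by intro a ha; simp only [Set.mem_setOf_eq] at *
                       rw [neg_mul, ha, neg_zero] } := by
    intro i hi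
    have hlcs : ∀ i' ∈ I, lcs R 2 ≤
        { carrier := {y | y * i' = 0}
          zero_mem' := by simp
          add_mem' := by intro a b ha hb; simp only [Set.mem_setOf_eq] at *
                         rw [add_mul, ha, hb, add_zero]
          neg_mem' := by intro a ha; simp only [Set.mem_setOf_eq] at *
                         rw [neg_mul, ha, neg_zero] } := by
      intro i' hi'
      refine (AddSubgroup.closure_le _).mpr ?_
      rintro y ⟨s, rfl⟩
      show itComm s (2 - 1) * i' = 0
      have : itComm s (2 - 1) = s 0 * s 1 - s 1 * s 0 := rfl
      rw [this]
      exact hci i' hi' (s 0) (s 1)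
    refine sup_le (hlcs i hi) ?_
    refine (AddSubgroup.closure_le _).mpr ?_
    rintro y ⟨c, hc, r, rfl⟩
    show (c * r) * i = 0
    rw [mul_assoc]
    exact hlcs (r * i) (hsmul i hi r) hc
  rw [eq_bot_iff]
  intro x hx
  obtain ⟨hxI, hxR⟩ := hx
  rw [AddSubgroup.mem_bot]
  have hxx : x * x = 0 := hK x hxI hxR
  refine sp_aux hsp x (fun r => ?_)
  rw [show x * r = r * x from hcent x hxI r, mul_assoc, hxx, mul_zero]
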